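/- Let f ∈ R[x] with f(0) = 0, let γ be a face of the Newton diagram Γ(f), and suppose f_γ lies in the relative interior of the cone of sums of squares of polynomials with support in (1/2)γ. Then for any a > 0 and any α in bconv Δ_E(f_γ) \ γ, both f_γ + a x^α and f_γ - a x^α are sums of squares of formal power series. -/

import Mathlib

open MvPolynomial

noncomputable section
attribute [local instance] Classical.propDecidable

/-- The real point associated to an exponent vector. -/
def expPt {n : ℕ} (α : Fin n →₀ ℕ) : Fin n → ℝ := fun i => (α i : ℝ)

/-- `Δ(f) = ⋃_{α ∈ supp f} (α + ℝ₊ⁿ)`. -/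
def DeltaSet {n : ℕ} (f : MvPolynomial (Fin n) ℝ) : Set (Fin n → ℝ) :=
  {x | ∃ α ∈ f.support, ∀ i, (α i : ℝ) ≤ x i}

/-- The Newton polyhedron `conv Δ(f)`. -/
def NewtonPolyhedron {n : ℕ} (f : MvPolynomial (Fin n) ℝ) : Set (Fin n → ℝ) :=
  convexHull ℝ (DeltaSet f)

/-- `F` is a (nonempty) face of `P`, cut out by a supporting hyperplane. -/
def IsFaceOf {n : ℕ} (P F : Set (Fin n → ℝ)) : Prop :=
  F.Nonempty ∧ ∃ (A : Fin n → ℝ) (c : ℝ), A ≠ 0 ∧ (∀ x ∈ P, c ≤ ∑ i, A i * x i) ∧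
    F = {x ∈ P | ∑ i, A i * x i = c}

/-- A compact face of `P`. -/
def IsCompactFaceOf {n : ℕ} (P F : Set (Fin n → ℝ)) : Prop := IsFaceOf P F ∧ IsCompact F

/-- The Newton diagram: the union of the compact faces of the Newton polyhedron. -/
def NewtonDiagram {n : ℕ} (f : MvPolynomial (Fin n) ℝ) : Set (Fin n → ℝ) :=
  ⋃ F ∈ {F | IsCompactFaceOf (NewtonPolyhedron f) F}, F

/-- A maximal (compact) face of the Newton diagram of `f`. -/
def IsMaximalFace {n : ℕ} (f : MvPolynomial (Fin n) ℝ) (γ : Set (Fin n → ℝ)) : Prop :=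
  IsCompactFaceOf (NewtonPolyhedron f) γ ∧
    ∀ γ', IsCompactFaceOf (NewtonPolyhedron f) γ' → γ ⊆ γ' → γ' = γ

/-- `f_γ`: the sum of the terms of `f` whose exponents lie in `γ`. -/
def facePart {n : ℕ} (f : MvPolynomial (Fin n) ℝ) (γ : Set (Fin n → ℝ)) :
    MvPolynomial (Fin n) ℝ :=
  ∑ α ∈ f.support.filter (fun α => expPt α ∈ γ), monomial α (coeff α f)

/-- Sums of squares of polynomials supported in `(1/2)γ`, i.e. whose squared factors only
involve exponents `α` with `2α ∈ γ`. -/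
def sosHalfSupported {n : ℕ} (γ : Set (Fin n → ℝ)) : Set (MvPolynomial (Fin n) ℝ) :=
  {p | ∃ l : Multiset (MvPolynomial (Fin n) ℝ),
    (∀ q ∈ l, ∀ α ∈ q.support, (2 : ℝ) • expPt α ∈ γ) ∧ p = (l.map (· ^ 2)).sum}

/-- Algebraic characterization of membership in the relative interior of a convex set `C`:
`x ∈ C` and every segment from a point of `C` to `x` can be prolonged beyond `x` within `C`. -/
def MemRint {V : Type*} [AddCommGroup V] [Module ℝ V] (C : Set V) (x : V) : Prop :=
  x ∈ C ∧ ∀ y ∈ C, ∃ μ : ℝ, 1 < μ ∧ μ • x + (1 - μ) • y ∈ C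

/-- `Δ_E(f)`: union of `α + ℝ₊ⁿ` over the even exponents `α` in the support of `f`. -/
def DeltaESet {n : ℕ} (f : MvPolynomial (Fin n) ℝ) : Set (Fin n → ℝ) :=
  {x | ∃ α ∈ f.support, (∀ i, Even (α i)) ∧ ∀ i, (α i : ℝ) ≤ x i}

/-- `α ∈ bconv E`: `α` is a binary (dyadic) convex combination with full digits of even
integer points of `E`. -/
def MemBconv {n : ℕ} (E : Set (Fin n → ℝ)) (α : Fin n →₀ ℕ) : Prop :=
  ∃ (t N : ℕ) (A : Fin t → Fin n →₀ ℕ) (δ : Fin t → Fin N → Bool),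
    0 < t ∧
    (∀ s, expPt (A s) ∈ E ∧ ∀ i, Even (A s i)) ∧
    (∀ s : Fin t, 0 < ∑ k : Fin N, (if δ s k then ((2 : ℚ) ^ (k.1 + 1))⁻¹ else 0)) ∧
    (∑ s : Fin t, ∑ k : Fin N, (if δ s k then ((2 : ℚ) ^ (k.1 + 1))⁻¹ else 0)) = 1 ∧
    (∀ k : Fin N, ∃ s, δ s k = true) ∧
    (∀ i, (α i : ℚ) = ∑ s : Fin t,
      (∑ k : Fin N, (if δ s k then ((2 : ℚ) ^ (k.1 + 1))⁻¹ else 0)) * (A s i : ℚ))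

/-- `f` has a regular Newton polyhedron: every vertex of `Γ(f)` is even with positive
coefficient, and for each maximal face `γ` every "bad" exponent of `f` inside
`conv Δ(f_γ) \ γ` lies in `bconv Δ_E(f_γ)`. -/
def RegularNewtonPolyhedron {n : ℕ} (f : MvPolynomial (Fin n) ℝ) : Prop :=
  (∀ α : Fin n →₀ ℕ, expPt α ∈ Set.extremePoints ℝ (NewtonPolyhedron f) →
    (∀ i, Even (α i)) ∧ 0 < coeff α f) ∧
  (∀ γ, IsMaximalFace f γ → ∀ α ∈ f.support,
    expPt α ∈ convexHull ℝ (DeltaSet (facePart f γ)) → expPt α ∉ γ →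
    ((¬ ∀ i, Even (α i)) ∨ coeff α f < 0) →
    MemBconv (DeltaESet (facePart f γ)) α)

section SOSAux
open MvPowerSeries Finset
variable {n : ℕ}

def fsum (d : Fin n →₀ ℕ) : ℕ := d.sum fun _ m => m

lemma fsum_add (a b : Fin n →₀ ℕ) : fsum (a + b) = fsum a + fsum b := by
  simp [fsum, Finsupp.sum_add_index']

lemma fsum_pos {b : Fin n →₀ ℕ} (hb : b ≠ 0) : 0 < fsum b := by
  obtain ⟨i, hi⟩ : ∃ i, b i ≠ 0 := by
    by_contra h; push_neg at h; exact hb (Finsupp.ext h)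
  exact Finset.sum_pos' (fun _ _ => Nat.zero_le _)
    ⟨i, Finsupp.mem_support_iff.mpr hi, Nat.pos_of_ne_zero hi⟩

def sqc (F : MvPowerSeries (Fin n) ℝ) : (Fin n →₀ ℕ) → ℝ := fun d =>
  if d = 0 then Real.sqrt (MvPowerSeries.constantCoeff F) else
    (MvPowerSeries.coeff d F -
        ∑ p ∈ ((antidiagonal d).filter fun p => p.1 ≠ 0 ∧ p.2 ≠ 0).attach,
          sqc F p.1.1 * sqc F p.1.2) / (2 * Real.sqrt (MvPowerSeries.constantCoeff F))
termination_by d => fsum d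
decreasing_by
  · obtain ⟨hmem, h1, h2⟩ := Finset.mem_filter.mp p.2
    rw [Finset.HasAntidiagonal.mem_antidiagonal] at hmem
    have h4 := congrArg fsum hmem
    rw [fsum_add] at h4
    have := fsum_pos h2
    omega
  · obtain ⟨hmem, h1, h2⟩ := Finset.mem_filter.mp p.2
    rw [Finset.HasAntidiagonal.mem_antidiagonal] at hmem
    have h4 := congrArg fsum hmem
    rw [fsum_add] at h4
    have := fsum_pos h1
    omega

lemma exists_mul_self_of_constCoeff_pos (F : MvPowerSeries (Fin n) ℝ)
    (hF : 0 < MvPowerSeries.constantCoeff F) : ∃ G : MvPowerSeries (Fin n) ℝ, G * G = F := by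
  have hs : Real.sqrt (MvPowerSeries.constantCoeff F) ≠ 0 := ne_of_gt (Real.sqrt_pos.mpr hF)
  refine ⟨@id (MvPowerSeries (Fin n) ℝ) (sqc F), ?_⟩
  ext d
  have hcoe : ∀ e : Fin n →₀ ℕ,
      MvPowerSeries.coeff e (@id (MvPowerSeries (Fin n) ℝ) (sqc F)) = sqc F e := fun e => rfl
  rw [MvPowerSeries.coeff_mul]
  by_cases hd : d = 0
  · subst hd
    rw [Finsupp.antidiagonal_zero, Finset.sum_singleton]
    simp only [hcoe]
    rw [sqc]
    simp only [if_pos, if_true]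
    rw [Real.mul_self_sqrt hF.le]
    simp [MvPowerSeries.coeff_zero_eq_constantCoeff]
  · rw [← Finset.sum_filter_add_sum_filter_not (antidiagonal d) (fun p => p.1 ≠ 0 ∧ p.2 ≠ 0)]
    have hpair : (antidiagonal d).filter (fun p => ¬(p.1 ≠ 0 ∧ p.2 ≠ 0)) =
        {((0 : Fin n →₀ ℕ), d), (d, (0 : Fin n →₀ ℕ))} := by
      ext ⟨p1, p2⟩
      simp only [Finset.mem_filter, Finset.HasAntidiagonal.mem_antidiagonal, Finset.mem_insert, Finset.mem_singleton,
        not_and_or, not_not, Prod.mk.injEq]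
      constructor
      · rintro ⟨hsum, h0 | h0⟩
        · subst h0; rw [zero_add] at hsum; exact Or.inl ⟨rfl, hsum⟩
        · subst h0; rw [add_zero] at hsum; exact Or.inr ⟨hsum, rfl⟩
      · rintro (⟨h1, h2⟩ | ⟨h1, h2⟩) <;> subst h1 <;> subst h2 <;> simp
    have hne : ((0 : Fin n →₀ ℕ), d) ≠ (d, (0 : Fin n →₀ ℕ)) :=
      fun h => hd (congrArg Prod.snd h)
    rw [hpair, Finset.sum_pair hne]
    simp only [hcoe]
    have hM : ∑ p ∈ (antidiagonal d).filter (fun p => p.1 ≠ 0 ∧ p.2 ≠ 0), sqc F p.1 * sqc F p.2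
        = ∑ p ∈ ((antidiagonal d).filter fun p => p.1 ≠ 0 ∧ p.2 ≠ 0).attach,
            sqc F p.1.1 * sqc F p.1.2 := (Finset.sum_attach _ _).symm
    rw [hM]
    have h0 : sqc F 0 = Real.sqrt (MvPowerSeries.constantCoeff F) := by rw [sqc]; simp
    have hdd : sqc F d = (MvPowerSeries.coeff d F -
        ∑ p ∈ ((antidiagonal d).filter fun p => p.1 ≠ 0 ∧ p.2 ≠ 0).attach,
          sqc F p.1.1 * sqc F p.1.2) / (2 * Real.sqrt (MvPowerSeries.constantCoeff F)) := by
      rw [sqc]; simp [hd]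
    rw [h0, hdd]
    field_simp
    ring

def lamQ {N : ℕ} (δ : Fin N → Bool) : ℚ :=
  ∑ k : Fin N, if δ k then ((2 : ℚ) ^ (k.1 + 1))⁻¹ else 0

lemma lamQ_nonneg {N : ℕ} (δ : Fin N → Bool) : 0 ≤ lamQ δ :=
  Finset.sum_nonneg fun k _ => by positivity

lemma lamQ_succ {M : ℕ} (δ : Fin (M + 1) → Bool) :
    lamQ δ = (if δ 0 then (1 : ℚ) / 2 else 0) + lamQ (fun k : Fin M => δ k.succ) / 2 := by
  rw [lamQ, Fin.sum_univ_succ]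
  congr 1
  · norm_num
  · rw [lamQ, Finset.sum_div]
    refine Finset.sum_congr rfl fun k _ => ?_
    rcases h : δ k.succ with _ | _ <;> simp [h, Fin.val_succ, pow_succ]
    ring

def halfE (β : Fin n →₀ ℕ) : Fin n →₀ ℕ := Finsupp.mapRange (· / 2) (by norm_num) β

lemma halfE_apply (β : Fin n →₀ ℕ) (i : Fin n) : halfE β i = β i / 2 :=
  Finsupp.mapRange_apply

def keyPoly {N t : ℕ} (B : Fin t → (Fin n →₀ ℕ)) (δ : Fin t → Fin N → Bool)
    (α : Fin n →₀ ℕ) (ε e : ℝ) : MvPolynomial (Fin n) ℝ :=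
  ∑ s, (ε * ((lamQ (δ s) : ℚ) : ℝ)) • MvPolynomial.monomial (B s) (1 : ℝ) + e • MvPolynomial.monomial α (1 : ℝ)

theorem soskey : ∀ (N : ℕ) {t : ℕ} (A B : Fin t → (Fin n →₀ ℕ)) (δ : Fin t → Fin N → Bool)
    (α : Fin n →₀ ℕ) (ε e : ℝ), 0 < ε →
    (∀ s i, Even (B s i)) → (∀ s i, Even (A s i)) → (∀ s i, B s i ≤ A s i) →
    (∀ k, ∃ s, δ s k = true) →
    (∑ s, lamQ (δ s)) = 1 →
    (∀ i, (α i : ℚ) = ∑ s, lamQ (δ s) * (A s i : ℚ)) →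
    (∃ s, lamQ (δ s) ≠ 0 ∧ A s ≠ B s) →
    IsSumSq ((keyPoly B δ α ε e : MvPowerSeries (Fin n) ℝ)) := by
  intro N
  induction N with
  | zero =>
    intro t A B δ α ε e hε hBe hAe hBA hfull hsum hα hne
    exfalso
    have : ∀ s : Fin t, lamQ (δ s) = 0 := fun s => by simp [lamQ]
    rw [Finset.sum_congr rfl fun s _ => this s] at hsum
    simp at hsum
  | succ M ih =>
    intro t A B δ α ε e hε hBe hAe hBA hfull hsum hα hne
    set δ' : Fin t → Fin M → Bool := fun s k => δ s k.succ with hδ'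
    have hsplit : ∀ s, lamQ (δ s) =
        (if δ s 0 then (1 : ℚ) / 2 else 0) + lamQ (δ' s) / 2 := fun s => lamQ_succ (δ s)
    set m := (Finset.univ.filter fun s : Fin t => δ s 0 = true).card with hm
    have hsum2 : (m : ℚ) / 2 + (∑ s, lamQ (δ' s)) / 2 = 1 := by
      rw [← hsum, Finset.sum_congr rfl fun s _ => hsplit s, Finset.sum_add_distrib,
        ← Finset.sum_div]
      congr 2
      rw [hm, Finset.card_filter]
      push_cast
      rw [Finset.sum_div]
      refine Finset.sum_congr rfl fun s _ => ?_
      rcases h : δ s 0 with _ | _ <;> simp [h]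
    have hSnn : (0 : ℚ) ≤ ∑ s, lamQ (δ' s) :=
      Finset.sum_nonneg fun s _ => lamQ_nonneg _
    have hm1 : 1 ≤ m := by
      obtain ⟨s, hs⟩ := hfull 0
      exact Finset.card_pos.mpr ⟨s, Finset.mem_filter.mpr ⟨Finset.mem_univ s, hs⟩⟩
    have hm2 : m ≤ 2 := by
      by_contra h
      push_neg at h
      have h3 : (3 : ℚ) ≤ (m : ℚ) := by exact_mod_cast h
      linarith
    have hm12 : m = 1 ∨ m = 2 := by omega
    rcases hm12 with hmv | hmv
    · -- m = 1 : recursive case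
      have hcard : (Finset.univ.filter fun s : Fin t => δ s 0 = true).card = 1 := by
        rw [← hm]; exact hmv
      obtain ⟨s₀, hfil⟩ := Finset.card_eq_one.mp hcard
      have hδ0 : ∀ s, δ s 0 = true ↔ s = s₀ := by
        intro s
        constructor
        · intro h
          have hin : s ∈ (Finset.univ.filter fun s : Fin t => δ s 0 = true) :=
            Finset.mem_filter.mpr ⟨Finset.mem_univ s, h⟩
          rw [hfil] at hin
          exact Finset.mem_singleton.mp hin
        · intro h
          have hin : s₀ ∈ ({s₀} : Finset (Fin t)) := Finset.mem_singleton_self _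
          rw [← hfil] at hin
          rw [h]
          exact (Finset.mem_filter.mp hin).2
      have hsum' : ∑ s, lamQ (δ' s) = 1 := by
        rw [hmv] at hsum2; push_cast at hsum2; linarith
      have h2α : ∀ i, 2 * (α i : ℚ) = (A s₀ i : ℚ) + ∑ s, lamQ (δ' s) * (A s i : ℚ) := by
        intro i
        rw [hα i, Finset.mul_sum]
        have hterm : ∀ s : Fin t, 2 * (lamQ (δ s) * (A s i : ℚ)) =
            (if s = s₀ then (A s i : ℚ) else 0) + lamQ (δ' s) * (A s i : ℚ) := by
          intro s
          rw [hsplit s]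
          by_cases hs : s = s₀
          · rw [if_pos ((hδ0 s).mpr hs), if_pos hs]; ring
          · rw [if_neg (fun hh => hs ((hδ0 s).mp hh)), if_neg hs]; ring
        rw [Finset.sum_congr rfl fun s _ => hterm s, Finset.sum_add_distrib,
          Finset.sum_ite_eq' Finset.univ s₀, if_pos (Finset.mem_univ s₀)]
      have hA0le : ∀ i, A s₀ i ≤ 2 * α i := by
        intro i
        have h1 : (A s₀ i : ℚ) ≤ 2 * (α i : ℚ) := by
          rw [h2α i]
          have h0 : (0:ℚ) ≤ ∑ s, lamQ (δ' s) * (A s i : ℚ) :=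
            Finset.sum_nonneg fun s _ => mul_nonneg (lamQ_nonneg _) (by positivity)
          linarith
        exact_mod_cast h1
      have hB0le : ∀ i, B s₀ i ≤ 2 * α i := fun i => le_trans (hBA s₀ i) (hA0le i)
      set E := A s₀ - B s₀ with hE
      set α'' := α + α - B s₀ with hα2
      set A' : Fin t → (Fin n →₀ ℕ) := fun s => A s + E with hA'
      set ρ := α - halfE (B s₀) with hρdef
      have hEiN : ∀ i, E i = A s₀ i - B s₀ i := fun i => by rw [hE, Finsupp.tsub_apply]
      have hEi : ∀ i, (E i : ℚ) = (A s₀ i : ℚ) - (B s₀ i : ℚ) := fun i => by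
        rw [hEiN i, Nat.cast_sub (hBA s₀ i)]
      have hEe : ∀ i, Even (E i) := fun i => by
        rw [hEiN i]
        exact (Nat.even_sub (hBA s₀ i)).mpr (by simp [hAe s₀ i, hBe s₀ i])
      have hα''iN : ∀ i, α'' i = α i + α i - B s₀ i := fun i => by
        rw [hα2, Finsupp.tsub_apply, Finsupp.add_apply]
      have hα''i : ∀ i, (α'' i : ℚ) = 2 * (α i : ℚ) - (B s₀ i : ℚ) := by
        intro i
        rw [hα''iN i, Nat.cast_sub (by have := hB0le i; omega)]
        push_cast; ring
      have hres := ih A' B δ' α'' (ε/2) (-(e*e)/(2*ε)) (by positivity) hBe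
        (fun s i => by
          have : A' s i = A s i + E i := by rw [hA']; rw [Finsupp.add_apply]
          rw [this]; exact (hAe s i).add (hEe i))
        (fun s i => by
          have : A' s i = A s i + E i := by rw [hA']; rw [Finsupp.add_apply]
          rw [this]; exact le_trans (hBA s i) (Nat.le_add_right _ _))
        (fun k => hfull k.succ)
        hsum'
        (by
          intro i
          have hAi : ∀ s : Fin t, (A' s i : ℚ) = (A s i : ℚ) + (E i : ℚ) := fun s => by
            rw [hA']; rw [Finsupp.add_apply]; push_cast; ring
          have : ∀ s : Fin t, lamQ (δ' s) * (A' s i : ℚ) =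
              lamQ (δ' s) * (A s i : ℚ) + lamQ (δ' s) * (E i : ℚ) := fun s => by
            rw [hAi s]; ring
          rw [Finset.sum_congr rfl fun s _ => this s, Finset.sum_add_distrib,
            ← Finset.sum_mul, hsum', one_mul, hα''i i, h2α i, hEi i]
          ring)
        (by
          by_cases hE0 : E = 0
          · have hABs₀ : A s₀ = B s₀ := by
              ext i
              have h1 : E i = 0 := by rw [hE0]; rfl
              rw [hEiN i] at h1
              have := hBA s₀ i; omega
            obtain ⟨sx, hsx1, hsx2⟩ := hne
            have hsxne : sx ≠ s₀ := fun h => hsx2 (by rw [h, hABs₀])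
            have hlam : lamQ (δ sx) = lamQ (δ' sx) / 2 := by
              rw [hsplit sx, if_neg (fun hh => hsxne ((hδ0 sx).mp hh)), zero_add]
            refine ⟨sx, fun h => hsx1 (by rw [hlam, h]; ring), ?_⟩
            have hAx : A' sx = A sx := by simp only [hA', hE0, add_zero]
            rw [hAx]; exact hsx2
          · have hsne : (∑ s, lamQ (δ' s)) ≠ 0 := by rw [hsum']; norm_num
            obtain ⟨s1, _, hs1⟩ := Finset.exists_ne_zero_of_sum_ne_zero hsne
            refine ⟨s1, hs1, ?_⟩
            intro hcon
            obtain ⟨i, hi⟩ : ∃ i, E i ≠ 0 := by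
              by_contra hc; push_neg at hc; exact hE0 (Finsupp.ext hc)
            have h1 : A' s1 i = B s1 i := by rw [hcon]
            have h2 : A' s1 i = A s1 i + E i := by rw [hA']; rw [Finsupp.add_apply]
            have := hBA s1 i; omega)
      set u := Real.sqrt (ε/2) with hudef
      have hu : u * u = ε / 2 := Real.mul_self_sqrt (by positivity)
      have hupos : 0 < u := Real.sqrt_pos.mpr (by positivity)
      have hune : u ≠ 0 := ne_of_gt hupos
      set Q := u • MvPolynomial.monomial (halfE (B s₀)) (1:ℝ) + (e/(2*u)) • MvPolynomial.monomial ρ (1:ℝ) with hQ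
      have hmul : ∀ (c d : ℝ) (a b : Fin n →₀ ℕ),
          (c • MvPolynomial.monomial a (1:ℝ)) * (d • MvPolynomial.monomial b (1:ℝ)) = (c*d) • MvPolynomial.monomial (a+b) (1:ℝ) := by
        intro c d a b
        rw [MvPolynomial.smul_monomial, MvPolynomial.smul_monomial, MvPolynomial.monomial_mul,
          MvPolynomial.smul_monomial]
        congr 1
        simp [smul_eq_mul]
      have hBB : halfE (B s₀) + halfE (B s₀) = B s₀ := by
        ext i
        rw [Finsupp.add_apply, halfE_apply]
        obtain ⟨c, hc⟩ := hBe s₀ i; omega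
      have hBρ : halfE (B s₀) + ρ = α := by
        ext i
        rw [Finsupp.add_apply, hρdef, Finsupp.tsub_apply, halfE_apply]
        have := hB0le i
        obtain ⟨c, hc⟩ := hBe s₀ i; omega
      have hρB : ρ + halfE (B s₀) = α := by rw [add_comm]; exact hBρ
      have hρρ : ρ + ρ = α'' := by
        ext i
        rw [Finsupp.add_apply, hρdef, Finsupp.tsub_apply, halfE_apply, hα''iN i]
        have := hB0le i
        obtain ⟨c, hc⟩ := hBe s₀ i; omega
      have c2 : u * (e/(2*u)) = e / 2 := by field_simp
      have c3 : (e/(2*u)) * u = e / 2 := by field_simp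
      have c4 : (e/(2*u)) * (e/(2*u)) = (e*e)/(2*ε) := by
        rw [div_mul_div_comm]
        congr 1
        have : (2*u) * (2*u) = 4 * (u * u) := by ring
        rw [this, hu]; ring
      have hQQ : Q * Q = (ε/2) • MvPolynomial.monomial (B s₀) (1:ℝ) + e • MvPolynomial.monomial α 1
          + ((e*e)/(2*ε)) • MvPolynomial.monomial α'' 1 := by
        rw [hQ, add_mul, mul_add, mul_add, hmul, hmul, hmul, hmul, hBB, hBρ, hρB, hρρ,
          hu, c2, c3, c4]
        module
      have hkey : keyPoly B δ α ε e = Q * Q + keyPoly B δ' α'' (ε/2) (-(e*e)/(2*ε)) := by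
        simp only [keyPoly]
        rw [hQQ]
        have hco : ∀ s : Fin t, (ε * ((lamQ (δ s) : ℚ) : ℝ)) =
            (if s = s₀ then ε/2 else 0) + (ε/2 * ((lamQ (δ' s) : ℚ) : ℝ)) := by
          intro s
          have hq := hsplit s
          by_cases hs : s = s₀
          · rw [if_pos ((hδ0 s).mpr hs)] at hq
            rw [if_pos hs]
            have hcast : ((lamQ (δ s) : ℚ) : ℝ) = 1/2 + ((lamQ (δ' s) : ℚ) : ℝ)/2 := by
              rw [hq]; push_cast; ring
            rw [hcast]; ring
          · rw [if_neg (fun hh => hs ((hδ0 s).mp hh))] at hq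
            rw [if_neg hs]
            have hcast : ((lamQ (δ s) : ℚ) : ℝ) = ((lamQ (δ' s) : ℚ) : ℝ)/2 := by
              rw [hq]; push_cast; ring
            rw [hcast]; ring
        rw [Finset.sum_congr rfl fun s _ => by rw [hco s, add_smul]]
        rw [Finset.sum_add_distrib]
        have hsing : (∑ s, (if s = s₀ then ε/2 else 0) • MvPolynomial.monomial (B s) (1:ℝ))
            = (ε/2) • MvPolynomial.monomial (B s₀) (1:ℝ) := by
          simp only [ite_smul, zero_smul]
          rw [Finset.sum_ite_eq' Finset.univ s₀, if_pos (Finset.mem_univ s₀)]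
        rw [hsing]
        module
      rw [hkey, MvPolynomial.coe_add, MvPolynomial.coe_mul]
      exact IsSumSq.sq_add _ hres
    · -- m = 2 : base case
      have hcard : (Finset.univ.filter fun s : Fin t => δ s 0 = true).card = 2 := by
        rw [← hm]; exact hmv
      obtain ⟨s₁, s₂, hne12, hfil⟩ := Finset.card_eq_two.mp hcard
      have hδ0 : ∀ s, δ s 0 = true ↔ (s = s₁ ∨ s = s₂) := by
        intro s
        constructor
        · intro h
          have hin : s ∈ (Finset.univ.filter fun s : Fin t => δ s 0 = true) :=
            Finset.mem_filter.mpr ⟨Finset.mem_univ s, h⟩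
          rw [hfil] at hin
          simpa using hin
        · intro h
          have hin : s ∈ ({s₁, s₂} : Finset (Fin t)) := by simpa using h
          rw [← hfil] at hin
          exact (Finset.mem_filter.mp hin).2
      have hzero : ∑ s, lamQ (δ' s) = 0 := by
        rw [hmv] at hsum2; push_cast at hsum2; linarith
      have hlam0 : ∀ s, lamQ (δ' s) = 0 := fun s =>
        (Finset.sum_eq_zero_iff_of_nonneg (fun s _ => lamQ_nonneg _)).mp hzero s
          (Finset.mem_univ s)
      have hlamcoef : ∀ s, lamQ (δ s) =
          (if s = s₁ then (1:ℚ)/2 else 0) + (if s = s₂ then (1:ℚ)/2 else 0) := by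
        intro s
        rw [hsplit s, hlam0 s]
        by_cases h1 : s = s₁
        · rw [if_pos ((hδ0 s).mpr (Or.inl h1)), if_pos h1, if_neg (by rw [h1]; exact hne12)]
          norm_num
        · by_cases h2 : s = s₂
          · rw [if_pos ((hδ0 s).mpr (Or.inr h2)), if_neg h1, if_pos h2]; norm_num
          · rw [if_neg (fun hh => by rcases (hδ0 s).mp hh with h | h; exacts [h1 h, h2 h]),
              if_neg h1, if_neg h2]
            norm_num
      have h2α : ∀ i, 2 * (α i : ℚ) = (A s₁ i : ℚ) + (A s₂ i : ℚ) := by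
        intro i
        rw [hα i, Finset.mul_sum]
        have hterm : ∀ s : Fin t, 2 * (lamQ (δ s) * (A s i : ℚ)) =
            (if s = s₁ then (A s i : ℚ) else 0) + (if s = s₂ then (A s i : ℚ) else 0) := by
          intro s
          rw [hlamcoef s]
          by_cases h1 : s = s₁
          · rw [if_pos h1, if_neg (by rw [h1]; exact hne12), if_pos h1,
              if_neg (by rw [h1]; exact hne12)]
            ring
          · by_cases h2 : s = s₂
            · rw [if_neg h1, if_pos h2, if_neg h1, if_pos h2]; ring
            · rw [if_neg h1, if_neg h2, if_neg h1, if_neg h2]; ring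
        rw [Finset.sum_congr rfl fun s _ => hterm s, Finset.sum_add_distrib,
          Finset.sum_ite_eq' Finset.univ s₁, Finset.sum_ite_eq' Finset.univ s₂,
          if_pos (Finset.mem_univ s₁), if_pos (Finset.mem_univ s₂)]
      have hAA : ∀ i, A s₁ i + A s₂ i = 2 * α i := by
        intro i
        have := h2α i
        exact_mod_cast this.symm
      have hB1le : ∀ i, B s₁ i ≤ 2 * α i := fun i => by
        have h1 := hBA s₁ i
        have h2 := hAA i
        omega
      set ρ := α - halfE (B s₁) with hρdef
      set τ := (A s₁ - B s₁) + (A s₂ - B s₂) with hτdef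
      have hτi : ∀ i, τ i = (A s₁ i - B s₁ i) + (A s₂ i - B s₂ i) := fun i => by
        rw [hτdef, Finsupp.add_apply, Finsupp.tsub_apply, Finsupp.tsub_apply]
      have hτne : τ ≠ 0 := by
        obtain ⟨sx, hsx1, hsx2⟩ := hne
        have hsx0 : δ sx 0 = true := by
          by_contra hc
          apply hsx1
          rw [hlamcoef sx]
          have hb : δ sx 0 ≠ true := hc
          rw [if_neg (fun hh => hb ((hδ0 sx).mpr (Or.inl hh))),
            if_neg (fun hh => hb ((hδ0 sx).mpr (Or.inr hh)))]
          norm_num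
        obtain ⟨i, hi⟩ : ∃ i, A sx i ≠ B sx i := by
          by_contra hc; push_neg at hc; exact hsx2 (Finsupp.ext hc)
        intro hcon
        have hτi0 : τ i = 0 := by rw [hcon]; rfl
        rw [hτi i] at hτi0
        have hb1 := hBA s₁ i
        have hb2 := hBA s₂ i
        rcases (hδ0 sx).mp hsx0 with h | h <;> subst h <;> omega
      have hBB : halfE (B s₁) + halfE (B s₁) = B s₁ := by
        ext i
        rw [Finsupp.add_apply, halfE_apply]
        obtain ⟨c, hc⟩ := hBe s₁ i; omega
      have hBB2 : halfE (B s₂) + halfE (B s₂) = B s₂ := by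
        ext i
        rw [Finsupp.add_apply, halfE_apply]
        obtain ⟨c, hc⟩ := hBe s₂ i; omega
      have hBρ : halfE (B s₁) + ρ = α := by
        ext i
        rw [Finsupp.add_apply, hρdef, Finsupp.tsub_apply, halfE_apply]
        have := hB1le i
        obtain ⟨c, hc⟩ := hBe s₁ i; omega
      have hρB : ρ + halfE (B s₁) = α := by rw [add_comm]; exact hBρ
      have hρρτ : ρ + ρ = B s₂ + τ := by
        ext i
        rw [Finsupp.add_apply, Finsupp.add_apply, hρdef, Finsupp.tsub_apply, halfE_apply,
          hτi i]
        have h1 := hB1le i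
        have h2 := hAA i
        have hb1 := hBA s₁ i
        have hb2 := hBA s₂ i
        obtain ⟨c, hc⟩ := hBe s₁ i; omega
      set u := Real.sqrt (ε/2) with hudef
      have hu : u * u = ε / 2 := Real.mul_self_sqrt (by positivity)
      have hupos : 0 < u := Real.sqrt_pos.mpr (by positivity)
      have hune : u ≠ 0 := ne_of_gt hupos
      set Q := u • MvPolynomial.monomial (halfE (B s₁)) (1:ℝ) + (e/(2*u)) • MvPolynomial.monomial ρ (1:ℝ) with hQ
      have hmul : ∀ (c d : ℝ) (a b : Fin n →₀ ℕ),
          (c • MvPolynomial.monomial a (1:ℝ)) * (d • MvPolynomial.monomial b (1:ℝ)) = (c*d) • MvPolynomial.monomial (a+b) (1:ℝ) := by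
        intro c d a b
        rw [MvPolynomial.smul_monomial, MvPolynomial.smul_monomial, MvPolynomial.monomial_mul,
          MvPolynomial.smul_monomial]
        congr 1
        simp [smul_eq_mul]
      have c2 : u * (e/(2*u)) = e / 2 := by field_simp
      have c3 : (e/(2*u)) * u = e / 2 := by field_simp
      have c4 : (e/(2*u)) * (e/(2*u)) = (e*e)/(2*ε) := by
        rw [div_mul_div_comm]
        congr 1
        have h4 : (2*u) * (2*u) = 4 * (u * u) := by ring
        rw [h4, hu]; ring
      have hQQ : Q * Q = (ε/2) • MvPolynomial.monomial (B s₁) (1:ℝ) + e • MvPolynomial.monomial α 1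
          + ((e*e)/(2*ε)) • MvPolynomial.monomial (B s₂ + τ) 1 := by
        rw [hQ, add_mul, mul_add, mul_add, hmul, hmul, hmul, hmul, hBB, hBρ, hρB, hρρτ,
          hu, c2, c3, c4]
        module
      set V := (ε/2) • (1 : MvPolynomial (Fin n) ℝ) + (-((e*e)/(2*ε))) • MvPolynomial.monomial τ (1:ℝ)
        with hV
      have hMV : (MvPolynomial.monomial (B s₂) (1:ℝ)) * V =
          (ε/2) • MvPolynomial.monomial (B s₂) (1:ℝ) + (-((e*e)/(2*ε))) • MvPolynomial.monomial (B s₂ + τ) 1 := by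
        rw [hV, mul_add, mul_smul_comm, mul_one, mul_smul_comm, MvPolynomial.monomial_mul,
          one_mul]
      have hkey : keyPoly B δ α ε e = Q * Q + MvPolynomial.monomial (B s₂) (1:ℝ) * V := by
        simp only [keyPoly]
        rw [hQQ, hMV]
        have hco : ∀ s : Fin t, (ε * ((lamQ (δ s) : ℚ) : ℝ)) =
            (if s = s₁ then ε/2 else 0) + (if s = s₂ then ε/2 else 0) := by
          intro s
          have hq := hlamcoef s
          by_cases h1 : s = s₁
          · have hv : lamQ (δ s) = 1/2 := by
              rw [hq, if_pos h1, if_neg (by rw [h1]; exact hne12)]; norm_num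
            rw [hv, if_pos h1, if_neg (by rw [h1]; exact hne12)]; push_cast; ring
          · by_cases h2 : s = s₂
            · have hv : lamQ (δ s) = 1/2 := by rw [hq, if_neg h1, if_pos h2]; norm_num
              rw [hv, if_neg h1, if_pos h2]; push_cast; ring
            · have hv : lamQ (δ s) = 0 := by rw [hq, if_neg h1, if_neg h2]; norm_num
              rw [hv, if_neg h1, if_neg h2]; push_cast; ring
        rw [Finset.sum_congr rfl fun s _ => by rw [hco s, add_smul]]
        rw [Finset.sum_add_distrib]
        have hsing1 : (∑ s, (if s = s₁ then ε/2 else 0) • MvPolynomial.monomial (B s) (1:ℝ))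
            = (ε/2) • MvPolynomial.monomial (B s₁) (1:ℝ) := by
          simp only [ite_smul, zero_smul]
          rw [Finset.sum_ite_eq' Finset.univ s₁, if_pos (Finset.mem_univ s₁)]
        have hsing2 : (∑ s, (if s = s₂ then ε/2 else 0) • MvPolynomial.monomial (B s) (1:ℝ))
            = (ε/2) • MvPolynomial.monomial (B s₂) (1:ℝ) := by
          simp only [ite_smul, zero_smul]
          rw [Finset.sum_ite_eq' Finset.univ s₂, if_pos (Finset.mem_univ s₂)]
        rw [hsing1, hsing2]
        module
      have hV0 : 0 < MvPowerSeries.constantCoeff (↑V : MvPowerSeries (Fin n) ℝ) := by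
        have hc0 : MvPowerSeries.coeff 0 (↑V : MvPowerSeries (Fin n) ℝ) = ε/2 := by
          rw [MvPolynomial.coeff_coe, hV]
          rw [MvPolynomial.coeff_add, MvPolynomial.coeff_smul, MvPolynomial.coeff_smul,
            MvPolynomial.coeff_zero_one, MvPolynomial.coeff_monomial, if_neg hτne]
          simp
        rw [← MvPowerSeries.coeff_zero_eq_constantCoeff_apply, hc0]
        positivity
      obtain ⟨G, hG⟩ := exists_mul_self_of_constCoeff_pos _ hV0
      rw [hkey, MvPolynomial.coe_add, MvPolynomial.coe_mul, MvPolynomial.coe_mul]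
      set X : MvPowerSeries (Fin n) ℝ :=
        (↑(MvPolynomial.monomial (halfE (B s₂)) (1:ℝ)) : MvPowerSeries (Fin n) ℝ) * G with hX
      have hXX : X * X = (↑(MvPolynomial.monomial (B s₂) (1:ℝ)) : MvPowerSeries (Fin n) ℝ) * ↑V := by
        rw [hX]
        have : (↑(MvPolynomial.monomial (halfE (B s₂)) (1:ℝ)) : MvPowerSeries (Fin n) ℝ) * G *
            ((↑(MvPolynomial.monomial (halfE (B s₂)) (1:ℝ)) : MvPowerSeries (Fin n) ℝ) * G) =
            ((↑(MvPolynomial.monomial (halfE (B s₂)) (1:ℝ)) : MvPowerSeries (Fin n) ℝ) *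
              (↑(MvPolynomial.monomial (halfE (B s₂)) (1:ℝ)) : MvPowerSeries (Fin n) ℝ)) * (G * G) := by
          ring
        rw [this, hG, ← MvPolynomial.coe_mul, MvPolynomial.monomial_mul, hBB2, one_mul]
      have h2 : IsSumSq (X * X) := by
        rw [← add_zero (X * X)]
        exact IsSumSq.sq_add _ IsSumSq.zero
      rw [← hXX]
      exact IsSumSq.sq_add _ h2

end SOSAux


section SOSAux2
variable {n : ℕ}

lemma smul_mono_mul (c d : ℝ) (a b : Fin n →₀ ℕ) :
    (c • MvPolynomial.monomial a (1:ℝ)) * (d • MvPolynomial.monomial b (1:ℝ)) =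
      (c*d) • MvPolynomial.monomial (a+b) (1:ℝ) := by
  rw [MvPolynomial.smul_monomial, MvPolynomial.smul_monomial, MvPolynomial.monomial_mul,
    MvPolynomial.smul_monomial]
  congr 1
  simp [smul_eq_mul]

lemma coe_smul' (c : ℝ) (q : MvPolynomial (Fin n) ℝ) :
    ((c • q : MvPolynomial (Fin n) ℝ) : MvPowerSeries (Fin n) ℝ) =
      c • (↑q : MvPowerSeries (Fin n) ℝ) := by
  apply MvPowerSeries.ext
  intro d
  rw [MvPolynomial.coeff_coe, MvPolynomial.coeff_smul, map_smul, MvPolynomial.coeff_coe]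

lemma isSumSq_smul {c : ℝ} (hc : 0 ≤ c) {S : MvPowerSeries (Fin n) ℝ} (h : IsSumSq S) :
    IsSumSq (c • S) := by
  induction h with
  | zero => simpa using IsSumSq.zero
  | @sq_add x S hS ih =>
    have hr : c • (x * x + S) = (Real.sqrt c • x) * (Real.sqrt c • x) + c • S := by
      rw [smul_add]
      congr 1
      rw [smul_mul_assoc, mul_smul_comm, smul_smul, Real.mul_self_sqrt hc]
    rw [hr]
    exact IsSumSq.sq_add _ ih

lemma isSumSq_coe_of_sq_multiset (l : Multiset (MvPolynomial (Fin n) ℝ)) :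
    IsSumSq ((((l.map (· ^ 2)).sum : MvPolynomial (Fin n) ℝ)) : MvPowerSeries (Fin n) ℝ) := by
  induction l using Multiset.induction_on with
  | empty => simpa [MvPolynomial.coe_zero] using IsSumSq.zero
  | cons a m ih =>
    rw [Multiset.map_cons, Multiset.sum_cons, MvPolynomial.coe_add, MvPolynomial.coe_pow,
      pow_two]
    exact IsSumSq.sq_add _ ih

end SOSAux2

/-- Let `f(0) = 0`, let `γ` be a (compact) face of the Newton diagram of `f` and suppose `f_γ`
lies in the relative interior of the cone of sums of squares supported in `(1/2)γ`. Then for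
every `a > 0` and every `α ∈ bconv Δ_E(f_γ) \\ γ`, both `f_γ + a x^α` and `f_γ - a x^α` are
sums of squares of formal power series. -/
theorem facePart_pm_monomial_sos {n : ℕ} (f : MvPolynomial (Fin n) ℝ)
    (hf0 : MvPolynomial.eval (0 : Fin n → ℝ) f = 0)
    (γ : Set (Fin n → ℝ)) (hγ : IsCompactFaceOf (NewtonPolyhedron f) γ)
    (hrint : MemRint (sosHalfSupported γ) (facePart f γ)) :
    ∀ a : ℝ, 0 < a → ∀ α : Fin n →₀ ℕ,
      MemBconv (DeltaESet (facePart f γ)) α → expPt α ∉ γ →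
      IsSumSq ((↑(facePart f γ + a • monomial α (1 : ℝ)) : MvPowerSeries (Fin n) ℝ)) ∧
      IsSumSq ((↑(facePart f γ - a • monomial α (1 : ℝ)) : MvPowerSeries (Fin n) ℝ)) := by
  classical
  obtain ⟨hfC, hprol⟩ := hrint
  obtain ⟨⟨hγne, L, cc, hL0, hLb, hγeq⟩, hγcpt⟩ := hγ
  have hγconv : Convex ℝ γ := by
    rw [hγeq]
    intro x hx y hy a b ha hb hab
    refine ⟨(convex_convexHull ℝ _) hx.1 hy.1 ha hb hab, ?_⟩
    have hterm : ∀ i, L i * (a • x + b • y) i = a * (L i * x i) + b * (L i * y i) := by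
      intro i
      simp only [Pi.add_apply, Pi.smul_apply, smul_eq_mul]
      ring
    rw [Finset.sum_congr rfl fun i _ => hterm i, Finset.sum_add_distrib, ← Finset.mul_sum,
      ← Finset.mul_sum, hx.2, hy.2, ← add_mul, hab, one_mul]
  have hsupp : ∀ β ∈ (facePart f γ).support, expPt β ∈ γ := by
    intro β hβ
    rw [facePart] at hβ
    have hb := MvPolynomial.support_sum hβ
    obtain ⟨a, ha, hmem⟩ := Finset.mem_biUnion.mp hb
    rw [MvPolynomial.support_monomial] at hmem
    by_cases hz : coeff a f = 0
    · rw [if_pos hz] at hmem; exact absurd hmem (Finset.notMem_empty β)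
    · rw [if_neg hz] at hmem
      have hba : β = a := Finset.mem_singleton.mp hmem
      rw [hba]
      exact (Finset.mem_filter.mp ha).2
  intro a ha α hbconv hαγ
  obtain ⟨t, N, A, δ, ht, hAs, hpos, hsumq, hfull, hαeq⟩ := hbconv
  have hAe : ∀ s i, Even (A s i) := fun s => (hAs s).2
  choose B hBmem hBrest using fun s => (hAs s).1
  have hBev : ∀ s i, Even (B s i) := fun s => (hBrest s).1
  have hBAle : ∀ s i, B s i ≤ A s i := by
    intro s i
    have h1 := (hBrest s).2 i
    have h2 : ((B s i : ℕ) : ℝ) ≤ ((A s i : ℕ) : ℝ) := h1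
    exact_mod_cast h2
  have hsum : (∑ s, lamQ (δ s)) = 1 := hsumq
  have hαeq' : ∀ i, (α i : ℚ) = ∑ s, lamQ (δ s) * (A s i : ℚ) := hαeq
  have hlamnn : ∀ s, (0:ℝ) ≤ ((lamQ (δ s) : ℚ) : ℝ) := fun s => by
    exact_mod_cast lamQ_nonneg (δ s)
  set p := ∑ s, ((lamQ (δ s) : ℚ) : ℝ) • monomial (B s) (1:ℝ) with hp
  have hBle2 : ∀ s, (2:ℝ) • expPt (halfE (B s)) = expPt (B s) := by
    intro s
    funext i
    simp only [expPt, Pi.smul_apply, smul_eq_mul, halfE_apply]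
    obtain ⟨c2, hc2⟩ := hBev s i
    have h2 : 2 * (B s i / 2) = B s i := by omega
    exact_mod_cast congrArg (fun x : ℕ => (x : ℝ)) h2
  have hpC : p ∈ sosHalfSupported γ := by
    refine ⟨Multiset.map
      (fun s => (Real.sqrt ((lamQ (δ s) : ℚ) : ℝ)) • monomial (halfE (B s)) (1:ℝ))
      Finset.univ.val, ?_, ?_⟩
    · intro q hq
      obtain ⟨s, _, rfl⟩ := Multiset.mem_map.mp hq
      intro β hβ
      have hsup : β ∈ (monomial (halfE (B s)) (1:ℝ)).support := MvPolynomial.support_smul hβ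
      rw [MvPolynomial.support_monomial, if_neg one_ne_zero] at hsup
      have hβeq : β = halfE (B s) := Finset.mem_singleton.mp hsup
      rw [hβeq, hBle2 s]
      exact hsupp _ (hBmem s)
    · rw [hp, Multiset.map_map]
      have hfun : ∀ s : Fin t,
          ((· ^ 2) ∘ fun s => (Real.sqrt ((lamQ (δ s) : ℚ) : ℝ)) •
            monomial (halfE (B s)) (1:ℝ)) s
          = ((lamQ (δ s) : ℚ) : ℝ) • monomial (B s) (1:ℝ) := by
        intro s
        simp only [Function.comp_apply]
        rw [pow_two, smul_mono_mul, Real.mul_self_sqrt (hlamnn s)]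
        have hBB : halfE (B s) + halfE (B s) = B s := by
          ext i
          rw [Finsupp.add_apply, halfE_apply]
          obtain ⟨c2, hc2⟩ := hBev s i
          omega
        rw [hBB]
      rw [Multiset.map_congr rfl (fun s _ => hfun s), ← Finset.sum_eq_multiset_sum]
  obtain ⟨μ, hμ1, hμC⟩ := hprol p hpC
  have hμ0 : (0:ℝ) < μ := by linarith
  have hεpos : (0:ℝ) < (μ - 1)/μ := div_pos (by linarith) hμ0
  obtain ⟨lc, hlc, hlcsum⟩ := hμC
  have hcsos : IsSumSq ((↑(μ • facePart f γ + (1-μ) • p) : MvPowerSeries (Fin n) ℝ)) := by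
    rw [hlcsum]
    exact isSumSq_coe_of_sq_multiset lc
  have hneq : ∃ s, lamQ (δ s) ≠ 0 ∧ A s ≠ B s := by
    by_contra hcon
    push_neg at hcon
    apply hαγ
    have hexp : expPt α = ∑ s, ((lamQ (δ s) : ℚ) : ℝ) • expPt (B s) := by
      funext i
      simp only [expPt, Finset.sum_apply, Pi.smul_apply, smul_eq_mul]
      have hQ : (α i : ℚ) = ∑ s, lamQ (δ s) * (B s i : ℚ) := by
        rw [hαeq' i]
        refine Finset.sum_congr rfl fun s _ => ?_
        by_cases h : lamQ (δ s) = 0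
        · rw [h, zero_mul, zero_mul]
        · rw [hcon s h]
      have hQR := congrArg (fun q : ℚ => (q : ℝ)) hQ
      push_cast at hQR
      exact hQR
    rw [hexp]
    exact hγconv.sum_mem (fun s _ => hlamnn s)
      (by exact_mod_cast congrArg (fun q : ℚ => (q : ℝ)) hsum)
      (fun s _ => hsupp (B s) (hBmem s))
  have key : ∀ e : ℝ, IsSumSq
      ((↑(facePart f γ + e • monomial α (1:ℝ)) : MvPowerSeries (Fin n) ℝ)) := by
    intro e
    have hks := soskey N A B δ α ((μ-1)/μ) e hεpos hBev hAe hBAle hfull hsum hαeq' hneq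
    have hsum2 : (∑ s, (((μ-1)/μ) * ((lamQ (δ s) : ℚ) : ℝ)) • monomial (B s) (1:ℝ))
        = ((μ-1)/μ) • p := by
      rw [hp, Finset.smul_sum]
      exact Finset.sum_congr rfl fun s _ => by rw [smul_smul]
    have hdecomp : facePart f γ + e • monomial α (1:ℝ) =
        μ⁻¹ • (μ • facePart f γ + (1-μ) • p) + keyPoly B δ α ((μ-1)/μ) e := by
      simp only [keyPoly]
      rw [hsum2]
      have hμne : μ ≠ 0 := ne_of_gt hμ0
      match_scalars <;> field_simp <;> ring
    rw [hdecomp, MvPolynomial.coe_add, coe_smul']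
    exact IsSumSq.add (isSumSq_smul (by positivity) hcsos) hks
  constructor
  · exact key a
  · have hrw : facePart f γ - a • monomial α (1:ℝ) =
        facePart f γ + (-a) • monomial α (1:ℝ) := by
      rw [neg_smul, sub_eq_add_neg]
    rw [hrw]
    exact key (-a)


end
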